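/- Any finite set of finitely many coherent probability constraints has a small support solution: if a system consisting of r linear inequalities over variables (u_v)_{v ∈ V} (V finite) together with Σ_v u_v = 1 and n equations Σ_v a_{i,v} u_v = z_i (coefficients a_{i,v} ∈ {0,1}) has a nonnegative solution, then it has a nonnegative solution in which at most r + n + 1 of the u_v are nonzero. -/

import Mathlib

open Finset

noncomputable def lfun {α : Type} [Fintype α] (c : α → ℝ) : (α → ℝ) →ₗ[ℝ] ℝ where
  toFun e := ∑ x, c x * e x
  map_add' e f := by simp [mul_add, Finset.sum_add_distrib]
  map_smul' t e := by
    simp [Finset.mul_sum]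
    exact Finset.sum_congr rfl fun i _ => by ring

lemma exists_kernel_dir {V : Type} [Fintype V] {ι : Type} [Fintype ι]
    (coef : ι → V → ℝ) (S : Finset V) (hcard : Fintype.card ι < S.card) :
    ∃ d : V → ℝ, d ≠ 0 ∧ (∀ v, v ∉ S → d v = 0) ∧ ∀ j, ∑ v, coef j v * d v = 0 := by
  classical
  set F : (↥S → ℝ) →ₗ[ℝ] (ι → ℝ) :=
    LinearMap.pi (fun j => lfun (fun x : ↥S => coef j x)) with hF
  have hnotinj : ¬ Function.Injective F := by
    intro hinj
    have := LinearMap.finrank_le_finrank_of_injective hinj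
    simp [Module.finrank_pi] at this
    omega
  have : ∃ e : ↥S → ℝ, e ≠ 0 ∧ F e = 0 := by
    rw [← LinearMap.ker_eq_bot] at hnotinj
    obtain ⟨e, he, hne⟩ := Submodule.ne_bot_iff _ |>.mp hnotinj
    exact ⟨e, hne, he⟩
  obtain ⟨e, hene, hFe⟩ := this
  refine ⟨fun v => if h : v ∈ S then e ⟨v, h⟩ else 0, ?_, ?_, ?_⟩
  · obtain ⟨x, hx⟩ := Function.ne_iff.mp hene
    intro h
    have := congrFun h x.1
    simp [x.2] at this
    exact hx (by simpa using this)
  · intro v hv; simp [hv]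
  · intro j
    have h1 : ∑ v, coef j v * (if h : v ∈ S then e ⟨v, h⟩ else 0)
        = ∑ v ∈ S, coef j v * (if h : v ∈ S then e ⟨v, h⟩ else 0) := by
      symm
      refine Finset.sum_subset (Finset.subset_univ S) ?_
      intro v _ hv; simp [hv]
    rw [h1, ← Finset.sum_attach S (fun v => coef j v * (if h : v ∈ S then e ⟨v, h⟩ else 0))]
    have := congrFun hFe j
    simp only [hF, LinearMap.pi_apply, lfun, LinearMap.coe_mk, AddHom.coe_mk,
      Pi.zero_apply] at this
    rw [← this]
    refine Finset.sum_congr rfl fun x _ => ?_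
    simp [x.2]

lemma step_lemma {V : Type} [Fintype V] [DecidableEq V] (r n : ℕ)
    (b : Fin r → V → ℝ) (c : Fin r → ℝ) (a : Fin n → V → ℝ) (z : Fin n → ℝ)
    (u : V → ℝ) (h0 : ∀ v, 0 ≤ u v) (h1 : (∑ v, u v) = 1)
    (h2 : ∀ i, (∑ v, b i v * u v) ≤ c i) (h3 : ∀ i, (∑ v, a i v * u v) = z i)
    (hbig : r + n + 1 < Set.ncard {v | u v ≠ 0}) :
    ∃ u' : V → ℝ, (∀ v, 0 ≤ u' v) ∧ (∑ v, u' v) = 1 ∧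
      (∀ i, (∑ v, b i v * u' v) ≤ c i) ∧ (∀ i, (∑ v, a i v * u' v) = z i) ∧
      Set.ncard {v | u' v ≠ 0} < Set.ncard {v | u v ≠ 0} := by
  classical
  have hncard : ∀ w : V → ℝ, Set.ncard {v | w v ≠ 0}
      = (Finset.univ.filter fun v => w v ≠ 0).card := by
    intro w
    have : {v | w v ≠ 0} = ↑(Finset.univ.filter fun v => w v ≠ 0) := by ext v; simp
    rw [this, Set.ncard_coe_finset]
  rw [hncard] at hbig
  set S := Finset.univ.filter fun v => u v ≠ 0 with hS
  have hmemS : ∀ v, v ∈ S ↔ u v ≠ 0 := by intro v; simp [hS]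
  set coef : (Fin r ⊕ (Fin n ⊕ Unit)) → V → ℝ :=
    Sum.elim b (Sum.elim a (fun _ _ => 1)) with hcoef
  obtain ⟨d, hdne, hd0, hker⟩ := exists_kernel_dir coef S (by
    simp only [Fintype.card_sum, Fintype.card_fin, Fintype.card_unit]; omega)
  have hSsupp : ∀ v, d v ≠ 0 → v ∈ S := fun v hv => by
    by_contra h; exact hv (hd0 v h)
  have hsum_d : ∑ v, d v = 0 := by
    have := hker (Sum.inr (Sum.inr ()))
    simpa [hcoef] using this
  have hneg : ∃ v, d v < 0 := by
    by_contra h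
    push_neg at h
    have hz : ∀ v ∈ Finset.univ, d v = 0 :=
      (Finset.sum_eq_zero_iff_of_nonneg (fun v _ => h v)).mp hsum_d
    exact hdne (funext fun v => hz v (Finset.mem_univ v))
  set T := S.filter (fun v => d v < 0) with hT
  obtain ⟨vneg, hvneg⟩ := hneg
  have hTne : T.Nonempty := ⟨vneg, by
    simp only [hT, Finset.mem_filter]
    exact ⟨hSsupp vneg hvneg.ne, hvneg⟩⟩
  set t := T.inf' hTne (fun v => u v / (-d v)) with ht
  have hupos : ∀ v ∈ S, 0 < u v := fun v hv =>
    lt_of_le_of_ne (h0 v) (Ne.symm ((hmemS v).mp hv))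
  have htpos : 0 < t := by
    rw [ht, Finset.lt_inf'_iff]
    intro v hv
    simp only [hT, Finset.mem_filter] at hv
    exact div_pos (hupos v hv.1) (by linarith [hv.2])
  obtain ⟨v0, hv0T, hv0⟩ := Finset.exists_mem_eq_inf' hTne (fun v => u v / (-d v))
  have hv0S : v0 ∈ S := (Finset.mem_filter.mp hv0T).1
  have hdv0 : d v0 < 0 := (Finset.mem_filter.mp hv0T).2
  set u' : V → ℝ := fun v => u v + t * d v with hu'
  have hpres : ∀ w : V → ℝ, (∑ v, w v * d v) = 0 →
      (∑ v, w v * u' v) = ∑ v, w v * u v := by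
    intro w hw
    have : ∑ v, w v * u' v = ∑ v, w v * u v + t * ∑ v, w v * d v := by
      rw [Finset.mul_sum, ← Finset.sum_add_distrib]
      exact Finset.sum_congr rfl fun v _ => by simp [hu']; ring
    rw [this, hw]; ring
  have hnonneg : ∀ v, 0 ≤ u' v := by
    intro v
    rcases le_or_gt 0 (d v) with h | h
    · exact add_nonneg (h0 v) (mul_nonneg htpos.le h)
    · have hvT : v ∈ T := Finset.mem_filter.mpr ⟨hSsupp v h.ne, h⟩
      have hle : t ≤ u v / (-d v) := Finset.inf'_le _ hvT
      have h2 : t * (-d v) ≤ u v := (le_div_iff₀ (by linarith)).mp hle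
      rw [mul_neg] at h2
      simp only [hu']
      linarith
  have hzero : u' v0 = 0 := by
    have hd' : (0:ℝ) < -d v0 := by linarith
    have : u v0 / (-d v0) * d v0 = - u v0 := by
      rw [div_mul_eq_mul_div, div_neg, mul_div_assoc, div_self hdv0.ne, mul_one]
    simp only [hu', ht, hv0]
    linarith [this]
  refine ⟨u', hnonneg, ?_, ?_, ?_, ?_⟩
  · rw [Finset.sum_add_distrib, ← Finset.mul_sum, hsum_d, h1]; ring
  · intro i
    rw [hpres (b i) (by simpa [hcoef] using hker (Sum.inl i))]
    exact h2 i
  · intro i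
    rw [hpres (a i) (by simpa [hcoef] using hker (Sum.inr (Sum.inl i)))]
    exact h3 i
  · rw [hncard u, hncard u']
    have hsub : (Finset.univ.filter fun v => u' v ≠ 0) ⊆ S.erase v0 := by
      intro v hv
      simp only [Finset.mem_filter, Finset.mem_univ, true_and] at hv
      refine Finset.mem_erase.mpr ⟨?_, ?_⟩
      · rintro rfl; exact hv hzero
      · by_contra h
        have hu0 : u v = 0 := by
          by_contra h'; exact h ((hmemS v).mpr h')
        have hd0' : d v = 0 := hd0 v h
        exact hv (by simp [hu', hu0, hd0'])
    calc (Finset.univ.filter fun v => u' v ≠ 0).card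
        ≤ (S.erase v0).card := Finset.card_le_card hsub
      _ < S.card := Finset.card_erase_lt_of_mem hv0S

theorem stmt19 {V : Type} [Fintype V] (r n : ℕ)
    (b : Fin r → V → ℝ) (c : Fin r → ℝ)
    (a : Fin n → V → ℝ) (ha : ∀ i v, a i v = 0 ∨ a i v = 1) (z : Fin n → ℝ)
    (hsol : ∃ u : V → ℝ, (∀ v, 0 ≤ u v) ∧ (∑ v, u v) = 1 ∧
      (∀ i, (∑ v, b i v * u v) ≤ c i) ∧ (∀ i, (∑ v, a i v * u v) = z i)) :
    ∃ u : V → ℝ, (∀ v, 0 ≤ u v) ∧ (∑ v, u v) = 1 ∧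
      (∀ i, (∑ v, b i v * u v) ≤ c i) ∧ (∀ i, (∑ v, a i v * u v) = z i) ∧
      Set.ncard {v | u v ≠ 0} ≤ r + n + 1 := by
  classical
  obtain ⟨u, hu⟩ := hsol
  have key : ∀ k : ℕ, ∀ u : V → ℝ,
      Set.ncard {v | u v ≠ 0} ≤ k →
      ((∀ v, 0 ≤ u v) ∧ (∑ v, u v) = 1 ∧
        (∀ i, (∑ v, b i v * u v) ≤ c i) ∧ (∀ i, (∑ v, a i v * u v) = z i)) →
      ∃ u : V → ℝ, (∀ v, 0 ≤ u v) ∧ (∑ v, u v) = 1 ∧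
        (∀ i, (∑ v, b i v * u v) ≤ c i) ∧ (∀ i, (∑ v, a i v * u v) = z i) ∧
        Set.ncard {v | u v ≠ 0} ≤ r + n + 1 := by
    intro k
    induction k with
    | zero =>
      intro u hcard hcond
      exact ⟨u, hcond.1, hcond.2.1, hcond.2.2.1, hcond.2.2.2, by omega⟩
    | succ k ih =>
      intro u hcard hcond
      by_cases hle : Set.ncard {v | u v ≠ 0} ≤ r + n + 1
      · exact ⟨u, hcond.1, hcond.2.1, hcond.2.2.1, hcond.2.2.2, hle⟩
      · obtain ⟨u', h0', h1', h2', h3', hlt⟩ :=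
          step_lemma r n b c a z u hcond.1 hcond.2.1 hcond.2.2.1 hcond.2.2.2
            (by omega)
        exact ih u' (by omega) ⟨h0', h1', h2', h3'⟩
  obtain ⟨u', h0', h1', h2', h3', hcard'⟩ :=
    key (Fintype.card V) u (by
      calc Set.ncard {v | u v ≠ 0} ≤ Set.ncard (Set.univ : Set V) :=
            Set.ncard_le_ncard (Set.subset_univ _) (Set.finite_univ)
        _ = Fintype.card V := by rw [Set.ncard_univ, Nat.card_eq_fintype_card]) hu
  exact ⟨u', h0', h1', h2', h3', hcard'⟩
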